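/- Let (N,v) be a minimal incomplete game with n ≥ 2 players and total excess Δ ≥ 0, and let v_N be the extension defined by v_N(S) := Σ_{i∈S} v({i}) for S ≠ N and v_N(N) := v(N). Then for every permutation σ of N the marginal vector m_σ^{v_N} equals I^k where k is the player with σ(k) = n, and consequently the Weber set of v_N equals the imputation set: W(v_N) = I(v). -/

import Mathlib

open Finset

/-- The Shapley value `φ_i(w) = (1/n) ∑_{S ⊆ N∖{i}} C(n-1,|S|)⁻¹ (w(S∪{i}) - w(S))`. -/
noncomputable def shapley (n : ℕ) (w : Finset (Fin n) → ℝ) (i : Fin n) : ℝ :=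
  (1 / (n : ℝ)) * ∑ S ∈ (Finset.univ.erase i).powerset,
    ((Nat.choose (n - 1) S.card : ℝ))⁻¹ * (w (insert i S) - w S)

/-- A game is convex if `w(S) + w(T) ≤ w(S ∪ T) + w(S ∩ T)` for all coalitions. -/
def IsConvexGame {n : ℕ} (w : Finset (Fin n) → ℝ) : Prop :=
  ∀ S T : Finset (Fin n), w S + w T ≤ w (S ∪ T) + w (S ∩ T)

/-- The upper vector `b^w_i = w(N) - w(N∖{i})`. -/
noncomputable def upperVec {n : ℕ} (w : Finset (Fin n) → ℝ) (i : Fin n) : ℝ :=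
  w Finset.univ - w (Finset.univ.erase i)

/-- The gap function `g^w(S) = ∑_{i∈S} b^w_i - w(S)`. -/
noncomputable def gap {n : ℕ} (w : Finset (Fin n) → ℝ) (S : Finset (Fin n)) : ℝ :=
  (∑ i ∈ S, upperVec w i) - w S

/-- A game is 1-convex if `∑ b^w_i ≥ w(N)` and
`w(S) ≤ w(N) - ∑_{i ∈ N∖S} b^w_i` for every nonempty `S`. -/
def IsOneConvex {n : ℕ} (w : Finset (Fin n) → ℝ) : Prop :=
  w Finset.univ ≤ (∑ i, upperVec w i) ∧
  ∀ S : Finset (Fin n), S.Nonempty →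
    w S ≤ w Finset.univ - ∑ i ∈ Finset.univ \ S, upperVec w i

/-- `w` is an extension of the minimal incomplete game given by singleton values `v`
and grand-coalition value `vN`. -/
def IsExtension {n : ℕ} (v : Fin n → ℝ) (vN : ℝ) (w : Finset (Fin n) → ℝ) : Prop :=
  w ∅ = 0 ∧ (∀ i, w {i} = v i) ∧ w Finset.univ = vN

/-- Harsanyi dividend `d_w(T) = ∑_{S ⊆ T} (-1)^{|T|-|S|} w(S)`. -/
noncomputable def dividend {n : ℕ} (w : Finset (Fin n) → ℝ) (T : Finset (Fin n)) : ℝ :=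
  ∑ S ∈ T.powerset, (-1 : ℝ) ^ (T.card - S.card) * w S

/-- A game is positive if all Harsanyi dividends of nonempty coalitions are nonnegative. -/
def IsPositive {n : ℕ} (w : Finset (Fin n) → ℝ) : Prop :=
  ∀ T : Finset (Fin n), T.Nonempty → 0 ≤ dividend w T

/-- The extreme game `v^k`. -/
noncomputable def vgame (n : ℕ) (v : Fin n → ℝ) (Δ : ℝ) (k : Fin n)
    (S : Finset (Fin n)) : ℝ :=
  if 2 ≤ S.card ∧ k ∈ S then (∑ j ∈ S, v j) + Δ else ∑ j ∈ S, v j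

/-- The extreme game `v_T` (for `T` with `|T| ≥ 2`). -/
noncomputable def vTgame (n : ℕ) (v : Fin n → ℝ) (Δ : ℝ) (T : Finset (Fin n))
    (S : Finset (Fin n)) : ℝ :=
  if T ⊆ S then (∑ j ∈ S, v j) + Δ else ∑ j ∈ S, v j

/-- The extreme-ray game `e_T`. -/
def eTgame (n : ℕ) (T S : Finset (Fin n)) : ℝ := if S = T then -1 else 0

/-- The index set `E = {T ⊆ N : 2 ≤ |T| ≤ n-2}`. -/
def raysIndex (n : ℕ) : Finset (Finset (Fin n)) :=
  Finset.univ.filter (fun T => 2 ≤ T.card ∧ T.card ≤ n - 2)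

/-- The index set `N₁ = {T ⊆ N : |T| ≥ 2}`. -/
def coalN1 (n : ℕ) : Finset (Finset (Fin n)) :=
  Finset.univ.filter (fun T => 2 ≤ T.card)

/-- The convex combination `w_α = ∑_k α_k v^k`. -/
noncomputable def walpha (n : ℕ) (v : Fin n → ℝ) (Δ : ℝ) (α : Fin n → ℝ)
    (S : Finset (Fin n)) : ℝ :=
  ∑ k, α k * vgame n v Δ k S

/-- The game `w_{α,β} = ∑_k α_k v^k + ∑_{T∈E} β_T e_T`. -/
noncomputable def walphabeta (n : ℕ) (v : Fin n → ℝ) (Δ : ℝ) (α : Fin n → ℝ)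
    (β : Finset (Fin n) → ℝ) (S : Finset (Fin n)) : ℝ :=
  (∑ k, α k * vgame n v Δ k S) + ∑ T ∈ raysIndex n, β T * eTgame n T S

/-- The game `w_A = ∑_{T∈N₁} α_T v_T`. -/
noncomputable def wAgame (n : ℕ) (v : Fin n → ℝ) (Δ : ℝ) (A : Finset (Fin n) → ℝ)
    (S : Finset (Fin n)) : ℝ :=
  ∑ T ∈ coalN1 n, A T * vTgame n v Δ T S

/-- The imputation set `I(v)`. -/
def imputations (n : ℕ) (v : Fin n → ℝ) (vN : ℝ) : Set (Fin n → ℝ) :=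
  {x | (∑ i, x i) = vN ∧ ∀ i, v i ≤ x i}

/-- The imputation `I^k`. -/
noncomputable def Ik (n : ℕ) (v : Fin n → ℝ) (Δ : ℝ) (k : Fin n) : Fin n → ℝ :=
  fun i => if i = k then v i + Δ else v i

/-- The imputation `I^α`. -/
noncomputable def Ialpha (n : ℕ) (v : Fin n → ℝ) (Δ : ℝ) (α : Fin n → ℝ) : Fin n → ℝ :=
  fun i => v i + α i * Δ

/-- The core of a game. -/
def core {n : ℕ} (w : Finset (Fin n) → ℝ) : Set (Fin n → ℝ) :=
  {x | (∑ i, x i) = w Finset.univ ∧ ∀ S : Finset (Fin n), w S ≤ ∑ i ∈ S, x i}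

/-- The marginal vector `m_σ^w`. -/
noncomputable def margVec {n : ℕ} (w : Finset (Fin n) → ℝ) (σ : Equiv.Perm (Fin n))
    (i : Fin n) : ℝ :=
  w (insert i (Finset.univ.filter (fun j => σ j < σ i))) -
    w (Finset.univ.filter (fun j => σ j < σ i))

/-- The Weber set: the convex hull of all marginal vectors. -/
noncomputable def weber {n : ℕ} (w : Finset (Fin n) → ℝ) : Set (Fin n → ℝ) :=
  convexHull ℝ {m | ∃ σ : Equiv.Perm (Fin n), m = margVec w σ}

/-- The maximal surplus `s_{ij}(x,w) = max {w(S) - x(S) : i ∈ S, j ∉ S}`. -/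
noncomputable def surplus {n : ℕ} (w : Finset (Fin n) → ℝ) (x : Fin n → ℝ)
    (i j : Fin n) : ℝ :=
  sSup {r : ℝ | ∃ S : Finset (Fin n), i ∈ S ∧ j ∉ S ∧ r = w S - ∑ m ∈ S, x m}

/-- The prekernel of a game. -/
def prekernel {n : ℕ} (w : Finset (Fin n) → ℝ) : Set (Fin n → ℝ) :=
  {x | (∑ i, x i) = w Finset.univ ∧
    ∀ i j : Fin n, i ≠ j → surplus w x i j = surplus w x j i}

/-- The extension `v_N` given by `v_N(S) = ∑_{i∈S} v({i})` for `S ≠ N`, `v_N(N) = v(N)`. -/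
noncomputable def vNgame (n : ℕ) (v : Fin n → ℝ) (vN : ℝ) (S : Finset (Fin n)) : ℝ :=
  if S = Finset.univ then vN else ∑ i ∈ S, v i

/-- every marginal vector of `v_N` equals `I^k` where `k` is the last player
of the permutation, and the Weber set of `v_N` equals the imputation set. -/
theorem stmt14 (n : ℕ) (hn : 2 ≤ n) (v : Fin n → ℝ) (vN : ℝ) (Δ : ℝ)
    (hΔdef : Δ = vN - ∑ i, v i) (hΔ : 0 ≤ Δ) :
    (∀ σ : Equiv.Perm (Fin n), ∀ k : Fin n, (σ k : ℕ) = n - 1 →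
        margVec (vNgame n v vN) σ = Ik n v Δ k) ∧
    weber (vNgame n v vN) = imputations n v vN := by
  have hn0 : 0 < n := by omega
  have hmarg : ∀ σ : Equiv.Perm (Fin n), ∀ k : Fin n, (σ k : ℕ) = n - 1 →
      margVec (vNgame n v vN) σ = Ik n v Δ k := by
    intro σ k hk
    have hkmax : ∀ j : Fin n, j ≠ k → σ j < σ k := by
      intro j hj
      have hne : (σ j : ℕ) ≠ (σ k : ℕ) := by
        intro h
        exact hj (σ.injective (Fin.ext h))
      have hle : (σ j : ℕ) ≤ n - 1 := by
        have := (σ j).isLt; omega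
      have : (σ j : ℕ) < (σ k : ℕ) := by omega
      exact Fin.lt_def.mpr this
    funext i
    by_cases hik : i = k
    · subst hik
      have hins : insert i (Finset.univ.filter fun j => σ j < σ i) = Finset.univ := by
        ext j
        simp only [mem_insert, mem_filter, mem_univ, true_and, iff_true]
        by_cases hji : j = i
        · exact Or.inl hji
        · exact Or.inr (hkmax j hji)
      have hS : (Finset.univ.filter fun j => σ j < σ i) = Finset.univ.erase i := by
        ext j
        simp only [mem_filter, mem_univ, true_and, mem_erase, and_true]
        constructor
        · intro h hji; rw [hji] at h; exact lt_irrefl _ h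
        · intro h; exact hkmax j h
      have hSne : (Finset.univ.filter fun j => σ j < σ i) ≠ Finset.univ := by
        rw [hS]
        intro h
        have : i ∈ Finset.univ.erase i := by rw [h]; exact mem_univ i
        simp at this
      have e1 : vNgame n v vN (insert i (Finset.univ.filter fun j => σ j < σ i)) = vN := by
        rw [hins]; simp [vNgame]
      have e2 : vNgame n v vN (Finset.univ.filter fun j => σ j < σ i)
          = (∑ j, v j) - v i := by
        rw [vNgame, if_neg hSne, hS, Finset.sum_erase_eq_sub (mem_univ i)]
      simp only [margVec, e1, e2, Ik, if_pos rfl, if_true]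
      linarith [hΔdef.symm]
    · have hknotlt : ¬ σ k < σ i := not_lt.mpr (le_of_lt (hkmax i hik))
      have h1 : insert i (Finset.univ.filter fun j => σ j < σ i) ≠ Finset.univ := by
        intro h
        have : k ∈ insert i (Finset.univ.filter fun j => σ j < σ i) := by
          rw [h]; exact mem_univ k
        simp only [mem_insert, mem_filter, mem_univ, true_and] at this
        rcases this with h' | h'
        · exact hik h'.symm
        · exact hknotlt h'
      have h2 : (Finset.univ.filter fun j => σ j < σ i) ≠ Finset.univ := by
        intro h
        have : k ∈ (Finset.univ.filter fun j => σ j < σ i) := by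
          rw [h]; exact mem_univ k
        simp only [mem_filter, mem_univ, true_and] at this
        exact hknotlt this
      have hiS : i ∉ (Finset.univ.filter fun j => σ j < σ i) := by
        simp
      simp only [margVec, vNgame, if_neg h1, if_neg h2, Ik, if_neg hik]
      rw [Finset.sum_insert hiS]
      ring
  refine ⟨hmarg, ?_⟩
  have hIset : {m | ∃ σ : Equiv.Perm (Fin n), m = margVec (vNgame n v vN) σ}
      = Set.range (Ik n v Δ) := by
    ext m
    constructor
    · rintro ⟨σ, rfl⟩
      refine ⟨σ.symm ⟨n - 1, by omega⟩, ?_⟩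
      exact (hmarg σ _ (by simp)).symm
    · rintro ⟨k, rfl⟩
      refine ⟨Equiv.swap k ⟨n - 1, by omega⟩, ?_⟩
      refine (hmarg _ k ?_).symm
      simp [Equiv.swap_apply_left]
  have hIk_mem : ∀ k, Ik n v Δ k ∈ imputations n v vN := by
    intro k
    constructor
    · have : ∀ i, Ik n v Δ k i = v i + (if i = k then Δ else 0) := by
        intro i; simp only [Ik]; split <;> simp
      rw [Finset.sum_congr rfl fun i _ => this i, Finset.sum_add_distrib,
        Finset.sum_ite_eq' Finset.univ k (fun _ => Δ)]
      simp
      linarith [hΔdef]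
    · intro i
      simp only [Ik]
      split <;> linarith
  have hconv : Convex ℝ (imputations n v vN) := by
    intro x hx y hy a b ha hb hab
    constructor
    · simp only [Pi.add_apply, Pi.smul_apply, smul_eq_mul]
      rw [Finset.sum_add_distrib, ← Finset.mul_sum, ← Finset.mul_sum, hx.1, hy.1, ← add_mul, hab, one_mul]
    · intro i
      have h1 : a * v i ≤ a * x i := mul_le_mul_of_nonneg_left (hx.2 i) ha
      have h2 : b * v i ≤ b * y i := mul_le_mul_of_nonneg_left (hy.2 i) hb
      have : v i = a * v i + b * v i := by rw [← add_mul, hab, one_mul]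
      simp only [Pi.add_apply, Pi.smul_apply, smul_eq_mul]
      linarith
  unfold weber
  rw [hIset]
  apply le_antisymm
  · exact convexHull_min (by rintro m ⟨k, rfl⟩; exact hIk_mem k) hconv
  · intro x hx
    rcases eq_or_lt_of_le hΔ with hΔ0 | hΔpos
    · have hsum : ∑ i, (x i - v i) = 0 := by
        rw [Finset.sum_sub_distrib, hx.1]; linarith [hΔdef]
      have hzero : ∀ i ∈ Finset.univ, x i - v i = 0 := by
        rw [← Finset.sum_eq_zero_iff_of_nonneg (fun i _ => by linarith [hx.2 i])]
        exact hsum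
      have hxv : x = Ik n v Δ ⟨0, hn0⟩ := by
        funext i
        have := hzero i (mem_univ i)
        simp only [Ik]
        split <;> linarith
      rw [hxv]
      exact subset_convexHull ℝ _ ⟨_, rfl⟩
    · set w : Fin n → ℝ := fun k => (x k - v k) / Δ with hw
      have hw0 : ∀ k ∈ Finset.univ, 0 ≤ w k :=
        fun k _ => div_nonneg (by linarith [hx.2 k]) hΔpos.le
      have hw1 : ∑ k, w k = 1 := by
        simp only [hw]
        rw [← Finset.sum_div, Finset.sum_sub_distrib, hx.1]
        field_simp
        linarith [hΔdef]
      have hmem := Finset.centerMass_mem_convexHull (t := Finset.univ) (w := w)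
        (z := Ik n v Δ) hw0 (by rw [hw1]; norm_num)
        (fun k _ => Set.mem_range_self k)
      rw [Finset.centerMass_eq_of_sum_1 _ _ hw1] at hmem
      have hxeq : x = ∑ k, w k • Ik n v Δ k := by
        funext i
        rw [Finset.sum_apply]
        have : ∀ k, (w k • Ik n v Δ k) i = w k * v i + (if i = k then w k * Δ else 0) := by
          intro k
          simp only [Pi.smul_apply, smul_eq_mul, Ik]
          split <;> ring
        rw [Finset.sum_congr rfl fun k _ => this k, Finset.sum_add_distrib,
          Finset.sum_ite_eq Finset.univ i (fun k => w k * Δ)]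
        rw [← Finset.sum_mul, hw1]
        simp only [hw, mem_univ, if_pos]
        field_simp
        ring
      rw [hxeq]
      exact hmem
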